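/- arXiv:0808.1822 — 3 statements merged into one kernel-verified Lean document; each statement's English description precedes it below -/
import Mathlib

section
/- Let A ⊆ ℝ^n be a measurable set avoiding distances d_1,…,d_N, with d = max_k d_k, and let ε > 0. Then there exists a periodic measurable set B ⊆ ℝ^n (invariant under the lattice 2Tℤ^n for some T > 0) which avoids the distances d_1,…,d_N and satisfies δ̄(B) ≥ δ̄(A) − ε. -/
open MeasureTheory Filter Real

noncomputable def besselJ (α : ℝ) (t : ℝ) : ℝ :=
  ∑' k : ℕ, ((-1 : ℝ) ^ k / (k.factorial * Real.Gamma (k + α + 1))) * (t / 2) ^ (2 * (k : ℝ) + α)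

noncomputable def Omega (n : ℕ) (t : ℝ) : ℝ :=
  if t = 0 then 1
  else Real.Gamma (n / 2 : ℝ) * (2 / t) ^ (((n : ℝ) - 2) / 2) * besselJ (((n : ℝ) - 2) / 2) t

noncomputable def upperDensity {n : ℕ} (A : Set (EuclideanSpace ℝ (Fin n))) : ℝ :=
  Filter.limsup
    (fun T : ℝ => (volume (A ∩ {x | ∀ i, |x i| ≤ T})).toReal / (2 * T) ^ n)
    Filter.atTop

def AvoidsDistance {n : ℕ} (A : Set (EuclideanSpace ℝ (Fin n))) (d : ℝ) : Prop :=
  ∀ x ∈ A, ∀ y ∈ A, dist x y ≠ d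

section Helpers

def pcube (n : ℕ) (R : ℝ) : Set (EuclideanSpace ℝ (Fin n)) := {x | ∀ i, |x i| ≤ R}

lemma measurableSet_pcube (n : ℕ) (R : ℝ) : MeasurableSet (pcube n R) := by
  have : pcube n R = ⋂ i, {x : EuclideanSpace ℝ (Fin n) | |x i| ≤ R} := by
    ext x; simp [pcube, Set.mem_iInter]
  rw [this]
  refine MeasurableSet.iInter fun i => ?_
  have hm : Measurable fun x : EuclideanSpace ℝ (Fin n) => x i := by fun_prop
  exact measurableSet_le hm.abs measurable_const

lemma volume_pcube (n : ℕ) {R : ℝ} (_hR : 0 ≤ R) :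
    volume (pcube n R) = ENNReal.ofReal (2 * R) ^ n := by
  have hpre : pcube n R
      = (MeasurableEquiv.toLp 2 (Fin n → ℝ)).symm ⁻¹' (Set.univ.pi fun _ : Fin n => Set.Icc (-R) R) := by
    ext x
    simp only [pcube, Set.mem_preimage, Set.mem_pi, Set.mem_univ, forall_true_left, Set.mem_Icc, Set.mem_setOf_eq, abs_le]
    exact Iff.rfl
  rw [hpre, (EuclideanSpace.volume_preserving_symm_measurableEquiv_toLp (Fin n)).measure_preimage
    ((MeasurableSet.univ_pi fun _ => measurableSet_Icc).nullMeasurableSet)]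
  rw [volume_pi_pi]
  simp [Real.volume_Icc]
  ring_nf
  rw [ENNReal.ofReal_mul' (by norm_num), mul_pow, ENNReal.ofReal_ofNat]

lemma vol_inter_pcube_zero {n : ℕ} (hn : 1 ≤ n) (C : Set (EuclideanSpace ℝ (Fin n))) {R : ℝ}
    (hR : R ≤ 0) : volume (C ∩ pcube n R) = 0 := by
  have hsub : C ∩ pcube n R ⊆ pcube n 0 := by
    rintro x ⟨-, hx⟩ i
    exact le_trans (hx i) hR
  refine measure_mono_null hsub ?_
  rw [volume_pcube n le_rfl]
  simp only [mul_zero, ENNReal.ofReal_zero]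
  exact zero_pow (by omega)

lemma frac_nonneg {n : ℕ} (hn : 1 ≤ n) (C : Set (EuclideanSpace ℝ (Fin n))) (R : ℝ) :
    0 ≤ (volume (C ∩ pcube n R)).toReal / (2 * R) ^ n := by
  rcases le_or_gt R 0 with h | h
  · rw [vol_inter_pcube_zero hn C h]; simp
  · exact div_nonneg ENNReal.toReal_nonneg (by positivity)

lemma frac_le_one {n : ℕ} (hn : 1 ≤ n) (C : Set (EuclideanSpace ℝ (Fin n))) (R : ℝ) :
    (volume (C ∩ pcube n R)).toReal / (2 * R) ^ n ≤ 1 := by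
  rcases le_or_gt R 0 with h | h
  · rw [vol_inter_pcube_zero hn C h]; simp
  · rw [div_le_one (by positivity)]
    have h1 : volume (C ∩ pcube n R) ≤ volume (pcube n R) :=
      measure_mono Set.inter_subset_right
    rw [volume_pcube n h.le] at h1
    calc (volume (C ∩ pcube n R)).toReal ≤ (ENNReal.ofReal (2*R) ^ n).toReal := by
          refine ENNReal.toReal_mono ?_ h1
          exact (ENNReal.pow_ne_top ENNReal.ofReal_ne_top)
      _ = (2*R)^n := by
          rw [ENNReal.toReal_pow, ENNReal.toReal_ofReal (by positivity)]

lemma vol_inter_pcube_ne_top {n : ℕ} (hn : 1 ≤ n) (C : Set (EuclideanSpace ℝ (Fin n))) (R : ℝ) :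
    volume (C ∩ pcube n R) ≠ ⊤ := by
  rcases le_or_gt R 0 with h | h
  · rw [vol_inter_pcube_zero hn C h]; exact ENNReal.zero_ne_top
  · refine ne_top_of_le_ne_top ?_ (measure_mono Set.inter_subset_right)
    rw [volume_pcube n h.le]
    exact (ENNReal.pow_ne_top ENNReal.ofReal_ne_top)

lemma abs_coord_le_dist {n : ℕ} (x y : EuclideanSpace ℝ (Fin n)) (i : Fin n) :
    |x i - y i| ≤ dist x y := by
  rw [EuclideanSpace.dist_eq]
  have h1 : |x i - y i| = Real.sqrt (dist (x i) (y i) ^ 2) := by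
    rw [Real.sqrt_sq dist_nonneg, Real.dist_eq]
  rw [h1]
  apply Real.sqrt_le_sqrt
  exact Finset.single_le_sum (f := fun j => dist (x j) (y j) ^ 2) (fun j _ => sq_nonneg _) (Finset.mem_univ i)

lemma upperDensity_eq {n : ℕ} (A : Set (EuclideanSpace ℝ (Fin n))) :
    upperDensity A = Filter.limsup
      (fun T : ℝ => (volume (A ∩ pcube n T)).toReal / (2 * T) ^ n) Filter.atTop := rfl

end Helpers

set_option maxHeartbeats 1000000 in
theorem periodization (n N : ℕ) (hn : 1 ≤ n) (d : Fin N → ℝ) (hd : ∀ k, 0 < d k)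
    (A : Set (EuclideanSpace ℝ (Fin n))) (hA : MeasurableSet A)
    (havoid : ∀ k, AvoidsDistance A (d k))
    (ε : ℝ) (hε : 0 < ε) :
    ∃ (B : Set (EuclideanSpace ℝ (Fin n))) (T : ℝ), 0 < T ∧
      MeasurableSet B ∧
      (∀ v : Fin n → ℤ, ∀ x : EuclideanSpace ℝ (Fin n),
        x ∈ B ↔ (x + (show EuclideanSpace ℝ (Fin n) from WithLp.toLp 2 (fun i => 2 * T * (v i)))) ∈ B) ∧
      (∀ k, AvoidsDistance B (d k)) ∧
      upperDensity B ≥ upperDensity A - ε := by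
  classical
  set f : ℝ → ℝ := fun R => (volume (A ∩ pcube n R)).toReal / (2 * R) ^ n with hfdef
  by_cases hcase : upperDensity A ≤ ε
  · refine ⟨∅, 1, one_pos, MeasurableSet.empty, by simp, fun k x hx => absurd hx (by simp), ?_⟩
    have h0 : upperDensity (∅ : Set (EuclideanSpace ℝ (Fin n))) = 0 := by
      rw [upperDensity_eq]
      simp only [Set.empty_inter, measure_empty, ENNReal.toReal_zero, zero_div]
      exact limsup_const 0
    rw [h0]; linarith
  push_neg at hcase
  set δ := upperDensity A with hδdef
  set D : ℝ := 1 + ∑ k, d k with hDdef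
  have hsum_nonneg : (0:ℝ) ≤ ∑ k, d k := Finset.sum_nonneg fun k _ => (hd k).le
  have hD1 : 1 ≤ D := by simp [hDdef]; linarith
  have hDd : ∀ k, d k < D := fun k => by
    have : d k ≤ ∑ j, d j :=
      Finset.single_le_sum (fun j _ => (hd j).le) (Finset.mem_univ k)
    simp only [hDdef]; linarith
  -- boundedness facts about f
  have hf0 : ∀ R, 0 ≤ f R := fun R => frac_nonneg hn A R
  have hf1 : ∀ R, f R ≤ 1 := fun R => frac_le_one hn A R
  have hδf : δ = limsup f atTop := upperDensity_eq A
  -- frequently f S > δ - ε/2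
  have hfreq : ∃ᶠ S in atTop, δ - ε/2 < f S := by
    have hb : IsBoundedUnder (· ≥ ·) atTop f := isBoundedUnder_of ⟨0, fun R => hf0 R⟩
    exact frequently_lt_of_lt_limsup hb.isCoboundedUnder_le (by rw [← hδf]; linarith)
  -- eventually the geometric factor is close to 1
  have htend : Tendsto (fun S : ℝ => (S / (S + D)) ^ n) atTop (nhds 1) := by
    have h1 : Tendsto (fun S : ℝ => S / (S + D)) atTop (nhds 1) := by
      have h2 : Tendsto (fun S : ℝ => 1 - D / (S + D)) atTop (nhds 1) := by
        have := (tendsto_const_nhds (x := D) (f := atTop (α := ℝ))).div_atTop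
          (tendsto_atTop_add_const_right atTop D tendsto_id)
        simpa using (tendsto_const_nhds (x := (1:ℝ))).sub this
      refine h2.congr' ?_
      filter_upwards [eventually_gt_atTop (0 : ℝ)] with S hS
      have hSD : S + D ≠ 0 := by positivity
      field_simp
      ring
    simpa using h1.pow n
  have hev : ∀ᶠ S in atTop, 0 < S ∧ 1 - ε/2 ≤ (S / (S + D)) ^ n :=
    (eventually_gt_atTop 0).and (htend.eventually (eventually_ge_nhds (by linarith)))
  obtain ⟨S, ⟨hS0, hSq⟩, hSf⟩ := (hev.and_frequently hfreq).exists
  set T : ℝ := S + D with hTdef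
  have hT0 : (0:ℝ) < T := by simp [hTdef]; linarith
  have hT1 : (1:ℝ) < T := by simp [hTdef]; linarith
  have hST : S < T := by simp [hTdef]; linarith
  set A' : Set (EuclideanSpace ℝ (Fin n)) := A ∩ pcube n S with hA'def
  have hA'meas : MeasurableSet A' := hA.inter (measurableSet_pcube n S)
  set τ : (Fin n → ℤ) → EuclideanSpace ℝ (Fin n) :=
    fun v => (WithLp.toLp 2 (fun i => 2 * T * (v i)) : EuclideanSpace ℝ (Fin n)) with hτdef
  set C : (Fin n → ℤ) → Set (EuclideanSpace ℝ (Fin n)) :=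
    fun v => {x | x - τ v ∈ A'} with hCdef
  set B : Set (EuclideanSpace ℝ (Fin n)) := ⋃ v, C v with hBdef
  have hmemB : ∀ x, x ∈ B ↔ ∃ v, x - τ v ∈ A' := fun x => by
    simp [hBdef, hCdef, Set.mem_iUnion]
  have hCmeas : ∀ v, MeasurableSet (C v) := by
    intro v
    have : C v = (fun x : EuclideanSpace ℝ (Fin n) => x - τ v) ⁻¹' A' := rfl
    rw [this]
    exact hA'meas.preimage ((continuous_id.sub continuous_const).measurable)
  have hBmeas : MeasurableSet B := MeasurableSet.iUnion hCmeas
  have hvolC : ∀ v, volume (C v) = volume A' := by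
    intro v
    have : C v = (fun x : EuclideanSpace ℝ (Fin n) => x + (-(τ v))) ⁻¹' A' := by
      ext x; simp [hCdef, sub_eq_add_neg]
    rw [this, measure_preimage_add_right]
  -- coordinates of τ
  have hτ_apply : ∀ v i, τ v i = 2 * T * (v i) := fun v i => rfl
  -- periodicity
  have hper : ∀ v : Fin n → ℤ, ∀ x : EuclideanSpace ℝ (Fin n),
      x ∈ B ↔ (x + (show EuclideanSpace ℝ (Fin n) from WithLp.toLp 2 (fun i => 2 * T * (v i)))) ∈ B := by
    intro v x
    have hτv : (show EuclideanSpace ℝ (Fin n) from WithLp.toLp 2 (fun i => 2 * T * (v i))) = τ v := rfl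
    rw [hτv, hmemB, hmemB]
    constructor
    · rintro ⟨w, hw⟩
      refine ⟨w + v, ?_⟩
      have : (x + τ v) - τ (w + v) = x - τ w := by
        ext i
        simp only [PiLp.sub_apply, PiLp.add_apply, hτ_apply, Pi.add_apply]
        push_cast
        ring
      rw [this]; exact hw
    · rintro ⟨w, hw⟩
      refine ⟨w - v, ?_⟩
      have : x - τ (w - v) = (x + τ v) - τ w := by
        ext i
        simp only [PiLp.sub_apply, PiLp.add_apply, hτ_apply, Pi.sub_apply]
        push_cast
        ring
      rw [this]; exact hw
  -- avoidance
  have havoidB : ∀ k, AvoidsDistance B (d k) := by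
    intro k x hx y hy hdist
    obtain ⟨v, hv⟩ := (hmemB x).mp hx
    obtain ⟨w, hw⟩ := (hmemB y).mp hy
    by_cases hvw : v = w
    · subst hvw
      refine havoid k _ hv.1 _ hw.1 ?_
      rw [dist_sub_right]
      exact hdist
    · obtain ⟨i, hi⟩ := Function.ne_iff.mp hvw
      have h1 : |(x - τ v) i| ≤ S := hv.2 i
      have h2 : |(y - τ w) i| ≤ S := hw.2 i
      have h3 : (1:ℝ) ≤ |(v i : ℝ) - (w i : ℝ)| := by
        exact_mod_cast Int.one_le_abs (sub_ne_zero.mpr hi)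
      have hxy : 2 * T - 2 * S ≤ |x i - y i| := by
        have hco : x i - y i = ((x - τ v) i - (y - τ w) i) + 2 * T * ((v i : ℝ) - (w i : ℝ)) := by
          simp only [PiLp.sub_apply, hτ_apply]
          ring
        have habs : 2 * T ≤ |2 * T * ((v i : ℝ) - (w i : ℝ))| := by
          rw [abs_mul]
          have h2T : |2 * T| = 2 * T := abs_of_pos (by linarith)
          rw [h2T]
          nlinarith
        have habs2 : |(x - τ v) i - (y - τ w) i| ≤ 2 * S := by
          calc |(x - τ v) i - (y - τ w) i| ≤ |(x - τ v) i| + |(y - τ w) i| := abs_sub _ _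
            _ ≤ 2 * S := by linarith
        calc 2 * T - 2 * S ≤ |2 * T * ((v i : ℝ) - (w i : ℝ))|
              - |(x - τ v) i - (y - τ w) i| := by linarith
          _ ≤ |x i - y i| := by
              rw [hco]
              have h8 := abs_sub
                (((x - τ v) i - (y - τ w) i) + 2 * T * ((v i : ℝ) - (w i : ℝ)))
                ((x - τ v) i - (y - τ w) i)
              have h5 : (((x - τ v) i - (y - τ w) i) + 2 * T * ((v i : ℝ) - (w i : ℝ)))
                  - ((x - τ v) i - (y - τ w) i) = 2 * T * ((v i : ℝ) - (w i : ℝ)) := by ring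
              rw [h5] at h8
              linarith
      have h6 : |x i - y i| ≤ dist x y := abs_coord_le_dist x y i
      have h7 := hDd k
      have hSle : S ≤ T - D := by simp [hTdef]
      rw [hdist] at h6
      nlinarith [hd k]
  -- density lower bound
  refine ⟨B, T, hT0, hBmeas, hper, havoidB, ?_⟩
  have hfS_eq : (volume A').toReal = f S * (2 * S) ^ n := by
    rw [hfdef]
    field_simp [hA'def]
    rfl
  set c : ℝ := (volume A').toReal / (2 * T) ^ n with hcdef
  have hc_ge : δ - ε ≤ c := by
    have hq1 : (S / T) ^ n ≤ 1 := pow_le_one₀ (by positivity) (by rw [div_le_one hT0]; linarith)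
    have hq0 : (S / (S + D)) ^ n = (S / T) ^ n := by rw [hTdef]
    rw [hq0] at hSq
    have hceq : c = f S * (S / T) ^ n := by
      rw [hcdef, hfS_eq]
      rw [div_pow, mul_div_assoc]
      congr 1
      rw [mul_pow, mul_pow]
      field_simp
    rw [hceq]
    nlinarith [hf1 S, hf0 S, mul_nonneg (hf0 S) (pow_nonneg (by positivity : (0:ℝ) ≤ S / T) n)]
  have hmain : c ≤ upperDensity B := by
    rw [upperDensity_eq]
    have hbB : IsBoundedUnder (· ≤ ·) atTop
        (fun R : ℝ => (volume (B ∩ pcube n R)).toReal / (2 * R) ^ n) :=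
      isBoundedUnder_of ⟨1, fun R => frac_le_one hn B R⟩
    refine le_limsup_of_frequently_le ?_ hbB
    rw [frequently_atTop]
    intro M
    set m : ℕ := ⌈M⌉₊ with hmdef
    set R : ℝ := (2 * m + 1) * T with hRdef
    have hmR : (m:ℝ) ≤ R := by
      have h1 : (m:ℝ) ≤ (2 * m + 1) := by push_cast; linarith [Nat.cast_nonneg (α := ℝ) m]
      nlinarith [Nat.cast_nonneg (α := ℝ) m]
    have hMR : M ≤ R := le_trans (Nat.le_ceil M) hmR
    refine ⟨R, hMR, ?_⟩
    -- the box of translations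
    set box : Finset (Fin n → ℤ) := Fintype.piFinset (fun _ => Finset.Icc (-(m:ℤ)) m) with hboxdef
    have hboxcard : box.card = (2 * m + 1) ^ n := by
      rw [hboxdef, Fintype.card_piFinset]
      simp [Int.card_Icc]
      congr 1
      omega
    have hdisj : (box : Set (Fin n → ℤ)).PairwiseDisjoint C := by
      intro v _ w _ hvw
      rw [Function.onFun, Set.disjoint_left]
      intro x hxv hxw
      obtain ⟨i, hi⟩ := Function.ne_iff.mp hvw
      have h1 : |(x - τ v) i| ≤ S := hxv.2 i
      have h2 : |(x - τ w) i| ≤ S := hxw.2 i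
      have h3 : (1:ℝ) ≤ |(v i : ℝ) - (w i : ℝ)| := by
        exact_mod_cast Int.one_le_abs (sub_ne_zero.mpr hi)
      have hco : (x - τ v) i - (x - τ w) i = 2 * T * ((w i : ℝ) - (v i : ℝ)) := by
        simp only [PiLp.sub_apply, hτ_apply]
        ring
      have h4 : |(x - τ v) i - (x - τ w) i| ≤ 2 * S := by
        calc |(x - τ v) i - (x - τ w) i| ≤ |(x - τ v) i| + |(x - τ w) i| := abs_sub _ _
          _ ≤ 2 * S := by linarith
      rw [hco, abs_mul, abs_of_pos (by linarith : (0:ℝ) < 2 * T), abs_sub_comm] at h4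
      nlinarith
    have hsum : volume (⋃ v ∈ box, C v) = (2 * m + 1) ^ n * volume A' := by
      rw [measure_biUnion_finset hdisj (fun v _ => hCmeas v)]
      rw [Finset.sum_congr rfl (fun v _ => hvolC v), Finset.sum_const, hboxcard]
      simp [nsmul_eq_mul]
    have hsub : (⋃ v ∈ box, C v) ⊆ B ∩ pcube n R := by
      intro x hx
      rw [Set.mem_iUnion₂] at hx
      obtain ⟨v, hvbox, hxv⟩ := hx
      constructor
      · exact Set.mem_iUnion.mpr ⟨v, hxv⟩
      · intro i
        have h1 : |(x - τ v) i| ≤ S := hxv.2 i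
        have h2 : |(v i : ℤ)| ≤ (m:ℤ) := by
          have h2a := Fintype.mem_piFinset.mp hvbox i
          rw [Finset.mem_Icc] at h2a
          exact abs_le.mpr h2a
        have h2' : |(v i : ℝ)| ≤ (m:ℝ) := by
          calc |(v i : ℝ)| = ((|v i| : ℤ) : ℝ) := by rw [Int.cast_abs]
            _ ≤ ((m:ℤ) : ℝ) := by exact_mod_cast h2
            _ = (m:ℝ) := by norm_num
        have h3 : x i = (x - τ v) i + 2 * T * (v i : ℝ) := by
          simp only [PiLp.sub_apply, hτ_apply]; ring
        calc |x i| ≤ |(x - τ v) i| + |2 * T * (v i : ℝ)| := by rw [h3]; exact abs_add_le _ _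
          _ ≤ S + 2 * T * (m:ℝ) := by
              rw [abs_mul, abs_of_pos (by linarith : (0:ℝ) < 2 * T)]
              have := mul_le_mul_of_nonneg_left h2' (by linarith : (0:ℝ) ≤ 2 * T)
              linarith
          _ ≤ R := by rw [hRdef]; push_cast; nlinarith
    have hvol_ge : (2 * m + 1) ^ n * volume A' ≤ volume (B ∩ pcube n R) := by
      rw [← hsum]; exact measure_mono hsub
    -- convert to reals
    have hfin : volume (B ∩ pcube n R) ≠ ⊤ := vol_inter_pcube_ne_top hn B R
    have hreal : ((2 * m + 1 : ℕ) : ℝ) ^ n * (volume A').toReal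
        ≤ (volume (B ∩ pcube n R)).toReal := by
      have hcast : ((2 * m + 1 : ℕ) : ENNReal) = 2 * (m : ENNReal) + 1 := by push_cast; ring
      rw [← hcast] at hvol_ge
      have := ENNReal.toReal_mono hfin hvol_ge
      rw [ENNReal.toReal_mul, ENNReal.toReal_pow, ENNReal.toReal_natCast] at this
      simpa using this
    have hR0 : (0:ℝ) < R := by
      rw [hRdef]; positivity
    have hgoal : c ≤ (volume (B ∩ pcube n R)).toReal / (2 * R) ^ n := by
      rw [hcdef, div_le_div_iff₀ (by positivity) (by positivity)]
      have hpow : (2 * R) ^ n = (2 * T) ^ n * ((2 * m + 1 : ℕ) : ℝ) ^ n := by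
        rw [hRdef, ← mul_pow]
        congr 1
        push_cast
        ring
      rw [hpow]
      calc (volume A').toReal * ((2 * T) ^ n * ((2 * m + 1 : ℕ) : ℝ) ^ n)
          = (((2 * m + 1 : ℕ) : ℝ) ^ n * (volume A').toReal) * (2 * T) ^ n := by ring
        _ ≤ (volume (B ∩ pcube n R)).toReal * (2 * T) ^ n := by
            exact mul_le_mul_of_nonneg_right hreal (by positivity)
    exact hgoal
  linarith
end

section
/- Let A ⊆ ℝ^n be a measurable periodic set avoiding distance 1, let φ(y) = δ̄(A ∩ (A − y)) be its autocorrelation function, and let v_1, …, v_{n+1} be the vertices of a regular simplex in ℝ^n of edge length 1. Then φ(v_1) + ⋯ + φ(v_{n+1}) ≤ φ(0) = δ̄(A). -/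
open MeasureTheory Filter Real
open Set Topology Pointwise

theorem box_volume (n : ℕ) (T : ℝ) (hT : 0 ≤ T) :
    volume {x : EuclideanSpace ℝ (Fin n) | ∀ i, |x i| ≤ T} = ENNReal.ofReal ((2*T)^n) := by
  have : {x : EuclideanSpace ℝ (Fin n) | ∀ i, |x i| ≤ T}
      = (MeasurableEquiv.toLp 2 (Fin n → ℝ)).symm ⁻¹' (Set.univ.pi fun _ => Icc (-T) T) := by
    ext x
    simp only [MeasurableEquiv.coe_toLp_symm, Set.mem_preimage,
      Set.mem_pi, Set.mem_univ, forall_true_left, Set.mem_Icc, Set.mem_setOf_eq, abs_le]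
  rw [this, MeasurePreserving.measure_preimage (EuclideanSpace.volume_preserving_symm_measurableEquiv_toLp (Fin n)) (MeasurableSet.univ_pi (fun _ => measurableSet_Icc)).nullMeasurableSet, volume_pi_pi]
  simp only [Real.volume_Icc, Finset.prod_const, Finset.card_univ, Fintype.card_fin]
  rw [show T - -T = 2*T by ring, ← ENNReal.ofReal_pow (by linarith)]

theorem box_measurable (n : ℕ) (T : ℝ) :
    MeasurableSet {x : EuclideanSpace ℝ (Fin n) | ∀ i, |x i| ≤ T} := by
  have : {x : EuclideanSpace ℝ (Fin n) | ∀ i, |x i| ≤ T}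
      = (MeasurableEquiv.toLp 2 (Fin n → ℝ)).symm ⁻¹' (Set.univ.pi fun _ => Icc (-T) T) := by
    ext x
    simp only [MeasurableEquiv.coe_toLp_symm, Set.mem_preimage,
      Set.mem_pi, Set.mem_univ, forall_true_left, Set.mem_Icc, Set.mem_setOf_eq, abs_le]
  rw [this]
  exact (MeasurableEquiv.toLp 2 (Fin n → ℝ)).symm.measurable
    (MeasurableSet.univ_pi (fun _ => measurableSet_Icc))

theorem coord_le_norm {n : ℕ} (x : EuclideanSpace ℝ (Fin n)) (i : Fin n) : |x i| ≤ ‖x‖ := by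
  rw [EuclideanSpace.norm_eq]
  rw [show |x i| = Real.sqrt (|x i|^2) by rw [Real.sqrt_sq_eq_abs, abs_abs]]
  apply Real.sqrt_le_sqrt
  exact Finset.single_le_sum (f := fun j => |x j|^2) (fun j _ => sq_nonneg _) (Finset.mem_univ i)

theorem density_tendsto {n : ℕ} (B : Module.Basis (Fin n) ℝ (EuclideanSpace ℝ (Fin n)))
    (S : Set (EuclideanSpace ℝ (Fin n)))
    (hper : ∀ g ∈ Submodule.span ℤ (Set.range B), ∀ x, x + g ∈ S ↔ x ∈ S) :
    ∃ c : ℝ, Filter.Tendsto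
      (fun T : ℝ => (volume (S ∩ {x | ∀ i, |x i| ≤ T})).toReal / (2*T)^n)
      atTop (𝓝 c) := by
  classical
  set μ := (volume : Measure (EuclideanSpace ℝ (Fin n)))
  set F := ZSpan.fundamentalDomain B with hF
  set box : ℝ → Set (EuclideanSpace ℝ (Fin n)) := fun T => {x | ∀ i, |x i| ≤ T} with hbox
  have hFD := ZSpan.isAddFundamentalDomain B μ
  -- bound on F
  obtain ⟨r, hr⟩ := (ZSpan.fundamentalDomain_isBounded B).subset_closedBall 0
  set R : ℝ := max r 1 with hRdef
  have hR1 : (1:ℝ) ≤ R := le_max_right _ _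
  have hR0 : (0:ℝ) < R := lt_of_lt_of_le one_pos hR1
  have hRF : ∀ y ∈ F, ∀ i, |y i| ≤ R := by
    intro y hy i
    have := hr hy
    rw [Metric.mem_closedBall, dist_zero_right] at this
    exact le_trans (coord_le_norm y i) (le_trans this (le_max_left _ _))
  -- membership of translated boxes
  have hmem : ∀ (g : EuclideanSpace ℝ (Fin n)) (T : ℝ) (x : EuclideanSpace ℝ (Fin n)), x ∈ g +ᵥ box T ↔ ∀ i, |x i - g i| ≤ T := by
    intro g T x
    rw [Set.mem_vadd_set_iff_neg_vadd_mem]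
    simp only [vadd_eq_add, neg_add_eq_sub, hbox, Set.mem_setOf_eq]
    constructor
    · intro h i; simpa [PiLp.sub_apply] using h i
    · intro h i; simpa [PiLp.sub_apply] using h i
  -- key geometric claim
  have claim : ∀ (g : EuclideanSpace ℝ (Fin n)) (T T' : ℝ), T + 2*R ≤ T' →
      (F ∩ (g +ᵥ box T)).Nonempty → F ⊆ g +ᵥ box T' := by
    rintro g T T' hTT' ⟨a, haF, hab⟩ y hy
    rw [hmem] at hab ⊢
    intro i
    have h1 := hRF a haF i
    have h2 := hRF y hy i
    have h3 := hab i
    have e : y i - g i = (y i - a i) + (a i - g i) := by ring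
    have h4 : |y i - g i| ≤ |y i - a i| + |a i - g i| := by
      rw [e]; exact abs_add_le _ _
    have h5 : |y i - a i| ≤ |y i| + |a i| := abs_sub _ _
    linarith
  -- invariance of S
  have hinv : ∀ g : Submodule.span ℤ (Set.range B), (g : EuclideanSpace ℝ (Fin n)) +ᵥ S = S := by
    intro g
    ext x
    rw [Set.mem_vadd_set_iff_neg_vadd_mem]
    have hneg : -(g : EuclideanSpace ℝ (Fin n)) ∈ Submodule.span ℤ (Set.range B) := neg_mem g.2
    have := hper _ hneg x
    simp only [vadd_eq_add, neg_add_eq_sub]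
    rw [sub_eq_add_neg]
    exact this
  haveI : MeasurableVAdd (Submodule.span ℤ (Set.range ⇑B)) (EuclideanSpace ℝ (Fin n)) :=
    { measurable_const_vadd := fun c => by simpa [Submodule.vadd_def, vadd_eq_add] using measurable_const_add (c : EuclideanSpace ℝ (Fin n)),
      measurable_vadd_const := fun x => by simpa [Submodule.vadd_def, vadd_eq_add] using (measurable_subtype_coe.add_const x) }
  haveI : VAddInvariantMeasure (Submodule.span ℤ (Set.range ⇑B)) (EuclideanSpace ℝ (Fin n)) μ :=
    ⟨fun c s _ => measure_preimage_add μ (c : EuclideanSpace ℝ (Fin n)) s⟩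
  -- the tsum identity for S ∩ box T
  have hsplit : ∀ T : ℝ, μ (S ∩ box T) = ∑' g : Submodule.span ℤ (Set.range B),
      μ (S ∩ ((g : EuclideanSpace ℝ (Fin n)) +ᵥ box T) ∩ F) := by
    intro T
    rw [hFD.measure_eq_tsum (S ∩ box T)]
    refine tsum_congr fun g => ?_
    have h1 : (g +ᵥ (S ∩ box T) : Set (EuclideanSpace ℝ (Fin n)))
        = ((g : EuclideanSpace ℝ (Fin n)) +ᵥ S) ∩ ((g : EuclideanSpace ℝ (Fin n)) +ᵥ box T) :=
      Set.vadd_set_inter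
    rw [h1, hinv g]
  have hboxsplit : ∀ T : ℝ, μ (box T) = ∑' g : Submodule.span ℤ (Set.range B),
      μ (((g : EuclideanSpace ℝ (Fin n)) +ᵥ box T) ∩ F) := by
    intro T
    rw [hFD.measure_eq_tsum (box T)]
    rfl
  -- upper bound
  have hup : ∀ T : ℝ, μ (S ∩ box T) * μ F ≤ μ (S ∩ F) * μ (box (T + 2*R)) := by
    intro T
    calc μ (S ∩ box T) * μ F
        = ∑' g : Submodule.span ℤ (Set.range B), μ (S ∩ ((g : EuclideanSpace ℝ (Fin n)) +ᵥ box T) ∩ F) * μ F := by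
          rw [hsplit T, ENNReal.tsum_mul_right]
      _ ≤ ∑' g : Submodule.span ℤ (Set.range B), μ (S ∩ F) * μ (((g : EuclideanSpace ℝ (Fin n)) +ᵥ box (T + 2*R)) ∩ F) := by
          apply ENNReal.tsum_le_tsum
          intro g
          by_cases h : (F ∩ ((g : EuclideanSpace ℝ (Fin n)) +ᵥ box T)).Nonempty
          · have hsub : F ⊆ (g : EuclideanSpace ℝ (Fin n)) +ᵥ box (T + 2*R) := claim _ _ _ le_rfl h
            rw [Set.inter_eq_right.mpr hsub]
            exact mul_le_mul_left (measure_mono (Set.inter_subset_inter Set.inter_subset_left (subset_refl F))) _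
          · rw [Set.not_nonempty_iff_eq_empty] at h
            have : S ∩ ((g : EuclideanSpace ℝ (Fin n)) +ᵥ box T) ∩ F = ∅ := by
              rw [Set.eq_empty_iff_forall_notMem]
              rintro x ⟨⟨_, hx2⟩, hx3⟩
              exact Set.eq_empty_iff_forall_notMem.mp h x ⟨hx3, hx2⟩
            rw [this]
            simp
      _ = μ (S ∩ F) * μ (box (T + 2*R)) := by
          rw [ENNReal.tsum_mul_left, ← hboxsplit]
  -- lower bound
  have hlo : ∀ T : ℝ, μ (S ∩ F) * μ (box (T - 2*R)) ≤ μ (S ∩ box T) * μ F := by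
    intro T
    calc μ (S ∩ F) * μ (box (T - 2*R))
        = ∑' g : Submodule.span ℤ (Set.range B), μ (S ∩ F) * μ (((g : EuclideanSpace ℝ (Fin n)) +ᵥ box (T - 2*R)) ∩ F) := by
          rw [ENNReal.tsum_mul_left, ← hboxsplit]
      _ ≤ ∑' g : Submodule.span ℤ (Set.range B), μ (S ∩ ((g : EuclideanSpace ℝ (Fin n)) +ᵥ box T) ∩ F) * μ F := by
          apply ENNReal.tsum_le_tsum
          intro g
          by_cases h : (F ∩ ((g : EuclideanSpace ℝ (Fin n)) +ᵥ box (T - 2*R))).Nonempty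
          · have hsub : F ⊆ (g : EuclideanSpace ℝ (Fin n)) +ᵥ box T := claim _ _ _ (by linarith) h
            have h1 : S ∩ F ⊆ S ∩ ((g : EuclideanSpace ℝ (Fin n)) +ᵥ box T) ∩ F :=
              fun x hx => ⟨⟨hx.1, hsub hx.2⟩, hx.2⟩
            calc μ (S ∩ F) * μ (((g : EuclideanSpace ℝ (Fin n)) +ᵥ box (T - 2*R)) ∩ F)
                ≤ μ (S ∩ F) * μ F := mul_le_mul_right (measure_mono Set.inter_subset_right) _
              _ ≤ μ (S ∩ ((g : EuclideanSpace ℝ (Fin n)) +ᵥ box T) ∩ F) * μ F :=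
                  mul_le_mul_left (measure_mono h1) _
          · rw [Set.not_nonempty_iff_eq_empty] at h
            have : ((g : EuclideanSpace ℝ (Fin n)) +ᵥ box (T - 2*R)) ∩ F = ∅ := by
              rw [Set.eq_empty_iff_forall_notMem]
              rintro x ⟨hx1, hx2⟩
              exact Set.eq_empty_iff_forall_notMem.mp h x ⟨hx2, hx1⟩
            rw [this]
            simp
      _ = μ (S ∩ box T) * μ F := by rw [hsplit T, ENNReal.tsum_mul_right]
  -- finiteness and positivity
  have hFfin : μ F ≠ ⊤ := by
    exact ((ZSpan.fundamentalDomain_isBounded B).measure_lt_top).ne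
  have hFpos : μ F ≠ 0 := ZSpan.measure_fundamentalDomain_ne_zero B
  have hSFfin : μ (S ∩ F) ≠ ⊤ := (lt_of_le_of_lt (measure_mono Set.inter_subset_right)
    ((ZSpan.fundamentalDomain_isBounded B).measure_lt_top)).ne
  set s : ℝ := (μ (S ∩ F)).toReal with hs
  set m : ℝ := (μ F).toReal with hm
  have hmpos : 0 < m := ENNReal.toReal_pos hFpos hFfin
  have hs0 : 0 ≤ s := ENNReal.toReal_nonneg
  refine ⟨s / m, ?_⟩
  set f : ℝ → ℝ := fun T => (μ (S ∩ box T)).toReal / (2*T)^n with hf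
  have hboxfin : ∀ T ≥ (0:ℝ), μ (S ∩ box T) ≠ ⊤ := by
    intro T hT
    refine (lt_of_le_of_lt (measure_mono Set.inter_subset_right) ?_).ne
    rw [show μ (box T) = volume {x : EuclideanSpace ℝ (Fin n) | ∀ i, |x i| ≤ T} from rfl,
      box_volume n T hT]
    exact ENNReal.ofReal_lt_top
  -- real inequalities
  have hupR : ∀ T ≥ (0:ℝ), (μ (S ∩ box T)).toReal * m ≤ s * (2*(T + 2*R))^n := by
    intro T hT
    have h := hup T
    rw [show μ (box (T + 2*R)) = ENNReal.ofReal ((2*(T+2*R))^n) from box_volume n _ (by linarith)] at h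
    have := ENNReal.toReal_mono (by
      exact ENNReal.mul_ne_top hSFfin ENNReal.ofReal_ne_top) h
    rwa [ENNReal.toReal_mul, ENNReal.toReal_mul, ENNReal.toReal_ofReal (by positivity)] at this
  have hloR : ∀ T ≥ 2*R, s * (2*(T - 2*R))^n ≤ (μ (S ∩ box T)).toReal * m := by
    intro T hT
    have h := hlo T
    rw [show μ (box (T - 2*R)) = ENNReal.ofReal ((2*(T-2*R))^n) from box_volume n _ (by linarith)] at h
    have := ENNReal.toReal_mono (ENNReal.mul_ne_top (hboxfin T (by linarith)) hFfin) h
    have h2 : (0:ℝ) ≤ T - 2*R := by linarith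
    rwa [ENNReal.toReal_mul, ENNReal.toReal_mul, ENNReal.toReal_ofReal (by positivity)] at this
  -- squeeze
  have hratio : ∀ a : ℝ, Filter.Tendsto (fun T : ℝ => (s/m) * ((2*(T + a))/(2*T))^n)
      atTop (𝓝 (s/m)) := by
    intro a
    have h1 : Filter.Tendsto (fun T : ℝ => (2*(T + a))/(2*T)) atTop (𝓝 1) := by
      have : ∀ᶠ T : ℝ in atTop, (2*(T + a))/(2*T) = 1 + a * T⁻¹ := by
        filter_upwards [eventually_gt_atTop 0] with T hT
        field_simp
      rw [Filter.tendsto_congr' this]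
      have : Filter.Tendsto (fun T : ℝ => 1 + a * T⁻¹) atTop (𝓝 (1 + a * 0)) :=
        tendsto_const_nhds.add (tendsto_const_nhds.mul tendsto_inv_atTop_zero)
      simpa using this
    have h2 : Filter.Tendsto (fun T : ℝ => ((2*(T + a))/(2*T))^n) atTop (𝓝 1) := by
      simpa using h1.pow n
    simpa using (tendsto_const_nhds (x := s/m)).mul h2
  apply tendsto_of_tendsto_of_tendsto_of_le_of_le'
    (hratio (-(2*R))) (hratio (2*R))
  · filter_upwards [eventually_ge_atTop (2*R + 1)] with T hT
    have hT0 : (0:ℝ) < T := by linarith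
    have h := hloR T (by linarith)
    rw [hf]
    rw [show (s/m) * ((2*(T + -(2*R)))/(2*T))^n = s * (2*(T - 2*R))^n / (m * (2*T)^n) by
      rw [div_pow, div_mul_div_comm, sub_eq_add_neg]]
    rw [div_le_div_iff₀ (by positivity) (by positivity)]
    calc s * (2*(T - 2*R))^n * (2*T)^n ≤ (μ (S ∩ box T)).toReal * m * (2*T)^n :=
          mul_le_mul_of_nonneg_right h (by positivity)
      _ = (μ (S ∩ box T)).toReal * (m * (2*T)^n) := by ring
  · filter_upwards [eventually_ge_atTop (2*R + 1)] with T hT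
    have hT0 : (0:ℝ) < T := by linarith
    have h := hupR T (by linarith)
    rw [hf]
    rw [show (s/m) * ((2*(T + 2*R))/(2*T))^n = s * (2*(T + 2*R))^n / (m * (2*T)^n) by
      rw [div_pow, div_mul_div_comm]]
    rw [div_le_div_iff₀ (by positivity) (by positivity)]
    calc (μ (S ∩ box T)).toReal * (m * (2*T)^n)
        = (μ (S ∩ box T)).toReal * m * (2*T)^n := by ring
      _ ≤ s * (2*(T + 2*R))^n * (2*T)^n := mul_le_mul_of_nonneg_right h (by positivity)

theorem span_periodic {n : ℕ} (b : Fin n → EuclideanSpace ℝ (Fin n))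
    (S : Set (EuclideanSpace ℝ (Fin n)))
    (h : ∀ i, ∀ x, x ∈ S ↔ x + b i ∈ S) :
    ∀ g ∈ Submodule.span ℤ (Set.range b), ∀ x, x + g ∈ S ↔ x ∈ S := by
  set H : AddSubgroup (EuclideanSpace ℝ (Fin n)) :=
    { carrier := {g | ∀ x, x + g ∈ S ↔ x ∈ S}
      zero_mem' := by intro x; simp
      add_mem' := by
        intro a c ha hc x
        rw [← add_assoc, hc (x + a), ha x]
      neg_mem' := by
        intro a ha x
        have := ha (x + -a)
        rw [add_assoc, neg_add_cancel, add_zero] at this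
        exact this.symm } with hH
  intro g hg
  have hle : Submodule.span ℤ (Set.range b) ≤ AddSubgroup.toIntSubmodule H := by
    rw [Submodule.span_le]
    rintro _ ⟨i, rfl⟩
    intro x
    exact (h i x).symm
  exact hle hg

theorem simplex_inequality (n : ℕ) (hn : 1 ≤ n)
    (A : Set (EuclideanSpace ℝ (Fin n))) (hA : MeasurableSet A)
    (b : Fin n → EuclideanSpace ℝ (Fin n)) (hb : LinearIndependent ℝ b)
    (hper : ∀ i, ∀ x : EuclideanSpace ℝ (Fin n), x ∈ A ↔ x + b i ∈ A)
    (havoid : AvoidsDistance A 1)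
    (v : Fin (n + 1) → EuclideanSpace ℝ (Fin n))
    (hv : Pairwise fun i j => dist (v i) (v j) = 1)
    (φ : EuclideanSpace ℝ (Fin n) → ℝ)
    (hφ : ∀ y, φ y = upperDensity (A ∩ {x | x + y ∈ A})) :
    (∑ i, φ (v i)) ≤ φ 0 ∧ φ 0 = upperDensity A := by
  classical
  haveI : Nonempty (Fin n) := ⟨⟨0, hn⟩⟩
  have hcard : Fintype.card (Fin n) = Module.finrank ℝ (EuclideanSpace ℝ (Fin n)) := by
    simp [finrank_euclideanSpace_fin]
  set B : Module.Basis (Fin n) ℝ (EuclideanSpace ℝ (Fin n)) :=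
    basisOfLinearIndependentOfCardEqFinrank hb hcard with hB
  have hBb : ⇑B = b := coe_basisOfLinearIndependentOfCardEqFinrank hb hcard
  set box : ℝ → Set (EuclideanSpace ℝ (Fin n)) := fun T => {x | ∀ i, |x i| ≤ T} with hbox
  set S : Fin (n+1) → Set (EuclideanSpace ℝ (Fin n)) :=
    fun i => A ∩ {x | x + v i ∈ A} with hS
  -- each S i is periodic
  have hSper : ∀ i j, ∀ x, x ∈ S i ↔ x + b j ∈ S i := by
    intro i j x
    simp only [hS, Set.mem_inter_iff, Set.mem_setOf_eq]
    rw [← hper j x, add_right_comm, ← hper j (x + v i)]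
  have hAper' : ∀ g ∈ Submodule.span ℤ (Set.range ⇑B), ∀ x, x + g ∈ A ↔ x ∈ A := by
    rw [hBb]; exact span_periodic b A hper
  have hSper' : ∀ i, ∀ g ∈ Submodule.span ℤ (Set.range ⇑B), ∀ x, x + g ∈ S i ↔ x ∈ S i := by
    intro i; rw [hBb]; exact span_periodic b (S i) (hSper i)
  -- density limits
  obtain ⟨cA, hcA⟩ := density_tendsto B A hAper'
  have hc : ∀ i, ∃ c, Filter.Tendsto
      (fun T : ℝ => (volume (S i ∩ box T)).toReal / (2*T)^n) atTop (𝓝 c) :=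
    fun i => density_tendsto B (S i) (hSper' i)
  choose c hcS using hc
  -- measurability
  have hSmeas : ∀ i, MeasurableSet (S i) := by
    intro i
    exact hA.inter ((measurable_add_const (v i)) hA)
  -- pairwise disjoint
  have hdisj : Pairwise (Function.onFun Disjoint S) := by
    intro i j hij
    rw [Function.onFun, Set.disjoint_left]
    rintro x ⟨_, hxi⟩ ⟨_, hxj⟩
    have h1 : dist (x + v i) (x + v j) = 1 := by
      rw [dist_add_left]; exact hv hij
    exact havoid _ hxi _ hxj h1
  -- pointwise inequality
  have hpt : ∀ T : ℝ, 1 ≤ T →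
      (∑ i, (volume (S i ∩ box T)).toReal / (2*T)^n)
        ≤ (volume (A ∩ box T)).toReal / (2*T)^n := by
    intro T hT
    have hT0 : (0:ℝ) ≤ T := by linarith
    have hboxfin : volume (box T) ≠ ⊤ := by
      rw [hbox]
      simp only []
      rw [box_volume n T hT0]
      exact ENNReal.ofReal_ne_top
    have hfin : ∀ i, volume (S i ∩ box T) ≠ ⊤ := fun i =>
      (lt_of_le_of_lt (measure_mono Set.inter_subset_right) hboxfin.lt_top).ne
    have hmeas : ∀ i, MeasurableSet (S i ∩ box T) := fun i =>
      (hSmeas i).inter (box_measurable n T)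
    have hdisj' : Pairwise (Function.onFun Disjoint (fun i => S i ∩ box T)) := by
      intro i j hij
      exact Set.disjoint_of_subset Set.inter_subset_left Set.inter_subset_left (hdisj hij)
    have hsum : ∑ i, volume (S i ∩ box T) ≤ volume (A ∩ box T) := by
      rw [← tsum_fintype (L := SummationFilter.unconditional _) (fun i => volume (S i ∩ box T)), ← measure_iUnion hdisj' hmeas]
      apply measure_mono
      apply Set.iUnion_subset
      intro i
      exact Set.inter_subset_inter Set.inter_subset_left (subset_refl _)
    have hsumR : ∑ i, (volume (S i ∩ box T)).toReal ≤ (volume (A ∩ box T)).toReal := by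
      rw [← ENNReal.toReal_sum (fun i _ => hfin i)]
      exact ENNReal.toReal_mono
        (lt_of_le_of_lt (measure_mono Set.inter_subset_right) hboxfin.lt_top).ne hsum
    rw [← Finset.sum_div]
    gcongr
  -- assemble
  have hsum_t : Filter.Tendsto (fun T : ℝ => ∑ i, (volume (S i ∩ box T)).toReal / (2*T)^n)
      atTop (𝓝 (∑ i, c i)) := tendsto_finset_sum _ (fun i _ => hcS i)
  have hle : (∑ i, c i) ≤ cA := by
    apply le_of_tendsto_of_tendsto hsum_t hcA
    filter_upwards [eventually_ge_atTop (1:ℝ)] with T hT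
    exact hpt T hT
  have hud : ∀ i, upperDensity (S i) = c i := fun i => (hcS i).limsup_eq
  have hudA : upperDensity A = cA := hcA.limsup_eq
  have hA0 : A ∩ {x : EuclideanSpace ℝ (Fin n) | x + 0 ∈ A} = A := by
    ext x; simp
  have h1 : (∑ i, φ (v i)) = ∑ i, c i := by
    apply Finset.sum_congr rfl
    intro i _
    rw [hφ (v i), ← hud i]
  have h2 : φ 0 = upperDensity A := by rw [hφ 0, hA0]
  refine ⟨?_, h2⟩
  rw [h1, h2, hudA]
  exact hle
end

section
/- Fix n ≥ 2 and N ≥ 1, and set ε = 1/(N·2^{N+1}). Let t_0 > 0 satisfy Ω_n(t) > 1 − ε for all 0 ≤ t ≤ t_0, and let t_1 > t_0 satisfy |Ω_n(t)| < ε for all t ≥ t_1; set r = t_1/t_0. Then for any distances d_1,…,d_N > 0 with d_{i+1}/d_i > r for all i, and for every 1 ≤ j ≤ N and t ≥ 0: Σ_{i=j}^N (1/2^{N−i+1}) Ω_n(t d_i) ≥ −1/2^{N−j+2} − (N−j)ε. -/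
open MeasureTheory Filter Real Finset intervalIntegral

lemma Gamma_add_nat (k : ℕ) (x : ℝ) (hx : 0 < x) :
    Real.Gamma (k + x) = Real.Gamma x * ∏ i ∈ Finset.range k, (x + i) := by
  induction k with
  | zero => simp
  | succ k ih =>
    have h1 : ((k:ℝ) + 1 + x) = (k + x) + 1 := by ring
    rw [show (((k+1:ℕ)):ℝ) = (k:ℝ)+1 by push_cast; ring, h1, Real.Gamma_add_one, ih,
      Finset.prod_range_succ]
    · ring
    · positivity

noncomputable def oc (n k : ℕ) : ℝ :=
  1 / ((k.factorial : ℝ) * ∏ i ∈ Finset.range k, ((n : ℝ) / 2 + i))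

noncomputable def SS (n : ℕ) (t : ℝ) : ℝ := ∑' k : ℕ, (-1 : ℝ) ^ k * oc n k * (t ^ 2 / 4) ^ k

lemma prod_pos' (n k : ℕ) (hn : 1 ≤ n) : (0:ℝ) < ∏ i ∈ Finset.range k, ((n : ℝ) / 2 + i) := by
  apply Finset.prod_pos
  intro i _
  have : (1:ℝ) ≤ n := by exact_mod_cast hn
  positivity

lemma one_le_prod' (n k : ℕ) (hn : 2 ≤ n) : (1:ℝ) ≤ ∏ i ∈ Finset.range k, ((n : ℝ) / 2 + i) := by
  have h2 : (2:ℝ) ≤ n := by exact_mod_cast hn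
  calc (1:ℝ) = ∏ i ∈ Finset.range k, 1 := by simp
  _ ≤ ∏ i ∈ Finset.range k, ((n : ℝ) / 2 + i) := by
      apply Finset.prod_le_prod
      · intro i _; norm_num
      · intro i _; have : (0:ℝ) ≤ i := Nat.cast_nonneg i; nlinarith

lemma oc_pos (n k : ℕ) (hn : 1 ≤ n) : 0 < oc n k := by
  apply div_pos one_pos
  exact mul_pos (by positivity) (prod_pos' n k hn)

lemma oc_le (n k : ℕ) (hn : 2 ≤ n) : oc n k ≤ 1 / (k.factorial : ℝ) := by
  have hfac : (0:ℝ) < (k.factorial : ℝ) := by exact_mod_cast Nat.factorial_pos k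
  apply one_div_le_one_div_of_le hfac
  nlinarith [one_le_prod' n k hn]

lemma omega_eq_SS (n : ℕ) (hn : 2 ≤ n) (t : ℝ) (ht : 0 ≤ t) : Omega n t = SS n t := by
  have hΓpos : 0 < Real.Gamma ((n:ℝ)/2) := Real.Gamma_pos_of_pos (by positivity)
  rcases eq_or_lt_of_le ht with h | h
  · simp only [Omega, ← h, if_true]
    rw [SS]
    have : ∀ k : ℕ, (-1 : ℝ) ^ k * oc n k * ((0:ℝ) ^ 2 / 4) ^ k
        = if k = 0 then 1 else 0 := by
      intro k
      cases k with
      | zero => simp [oc]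
      | succ k => simp
    rw [tsum_congr this, tsum_ite_eq]
  · have ht0 : t ≠ 0 := ne_of_gt h
    simp only [Omega, if_neg ht0, besselJ, SS]
    rw [← tsum_mul_left]
    congr 1; ext k
    have hth : (0:ℝ) < t/2 := by linarith
    have h2t : (0:ℝ) < 2/t := by positivity
    set ν : ℝ := ((n:ℝ) - 2)/2 with hν
    set A : ℝ := (2/t) ^ ν with hA
    have hApos : 0 < A := Real.rpow_pos_of_pos h2t ν
    have hΓk : Real.Gamma ((k:ℝ) + ν + 1) = Real.Gamma ((k:ℝ) + (n:ℝ)/2) := by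
      congr 1; rw [hν]; ring
    have hcancel : A * (t/2) ^ ν = 1 := by
      rw [hA, ← Real.mul_rpow (le_of_lt h2t) (le_of_lt hth),
        show (2/t) * (t/2) = 1 by field_simp]
      simp
    have hB : (t/2 : ℝ) ^ ν = A⁻¹ := eq_inv_of_mul_eq_one_right hcancel
    have hrp : (t/2 : ℝ) ^ (2*(k:ℝ) + ν) = (t^2/4)^k * A⁻¹ := by
      rw [Real.rpow_add hth, hB]
      congr 1
      rw [show (2*(k:ℝ)) = ((2*k:ℕ):ℝ) by push_cast; ring, Real.rpow_natCast, pow_mul]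
      congr 1; ring
    rw [hrp, hΓk, Gamma_add_nat k ((n:ℝ)/2) (by positivity), oc]
    have hprod := prod_pos' n k (by omega)
    have hfac : (0:ℝ) < (k.factorial : ℝ) := by exact_mod_cast Nat.factorial_pos k
    field_simp


-- Wallis product identity
lemma prod_odd_even (k : ℕ) : (∏ i ∈ Finset.range k, (2*(i:ℝ)+1)/(2*i+2)) = (2*k).factorial / (4^k * (k.factorial)^2) := by
  induction k with
  | zero => simp
  | succ k ih =>
    rw [Finset.prod_range_succ, ih]
    have h1 : (2*(k+1)) = (2*k)+1+1 := by ring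
    rw [h1, Nat.factorial_succ, Nat.factorial_succ, Nat.factorial_succ]
    push_cast
    have hf : (0:ℝ) < (2*k).factorial := by exact_mod_cast Nat.factorial_pos _
    have hf2 : (0:ℝ) < k.factorial := by exact_mod_cast Nat.factorial_pos _
    field_simp
    ring

-- periodicity: integral of cos^(2k) over a full period
lemma integral_cos_pow_two_pi (k : ℕ) : (∫ φ in (0:ℝ)..(2*π), Real.cos φ ^ (2*k)) = 2 * π * ∏ i ∈ Finset.range k, (2*(i:ℝ)+1)/(2*i+2) := by
  have hper : Function.Periodic (fun x : ℝ => Real.sin x ^ (2*k)) (2*π) :=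
    Real.sin_periodic.comp (· ^ (2*k))
  have h1 : (∫ φ in (0:ℝ)..(2*π), Real.cos φ ^ (2*k))
      = ∫ φ in (0:ℝ)..(2*π), Real.sin (φ + π/2) ^ (2*k) := by
    congr 1; ext φ; rw [Real.sin_add_pi_div_two]
  have h2 : (∫ φ in (0:ℝ)..(2*π), Real.sin (φ + π/2) ^ (2*k))
      = ∫ φ in (π/2)..(2*π + π/2), Real.sin φ ^ (2*k) := by
    have := intervalIntegral.integral_comp_add_right (a := (0:ℝ)) (b := 2*π) (fun φ => Real.sin φ ^ (2*k)) (π/2)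
    rw [zero_add] at this
    exact this
  have h3 : (∫ φ in (π/2)..(2*π + π/2), Real.sin φ ^ (2*k))
      = ∫ φ in (0:ℝ)..(2*π), Real.sin φ ^ (2*k) := by
    have := hper.intervalIntegral_add_eq (π/2) 0
    simpa [add_comm] using this
  have h4 : (∫ φ in (π:ℝ)..(2*π), Real.sin φ ^ (2*k)) = ∫ φ in (0:ℝ)..π, Real.sin φ ^ (2*k) := by
    have := intervalIntegral.integral_comp_add_right (a := (0:ℝ)) (b := π) (fun φ => Real.sin φ ^ (2*k)) π
    rw [zero_add, show π + π = 2*π by ring] at this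
    rw [← this]
    congr 1; ext φ
    rw [show φ + π = π + φ by ring]
    rw [show Real.sin (π + φ) = - Real.sin φ by rw [Real.sin_add]; simp]
    exact (Even.neg_pow (even_two_mul k) _)
  have h5 : (∫ φ in (0:ℝ)..(2*π), Real.sin φ ^ (2*k))
      = (∫ φ in (0:ℝ)..π, Real.sin φ ^ (2*k)) + ∫ φ in (π:ℝ)..(2*π), Real.sin φ ^ (2*k) := by
    rw [intervalIntegral.integral_add_adjacent_intervals] <;>
      exact (Continuous.intervalIntegrable (by fun_prop) _ _)
  rw [h1, h2, h3, h5, h4, integral_sin_pow_even]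
  ring

lemma prod_one_add (k : ℕ) : (∏ i ∈ Finset.range k, (1 + (i:ℝ))) = k.factorial := by
  induction k with
  | zero => simp
  | succ k ih => rw [Finset.prod_range_succ, ih, Nat.factorial_succ]; push_cast; ring

lemma oc_two (k : ℕ) : oc 2 k = 1 / ((k.factorial : ℝ) * k.factorial) := by
  rw [oc]
  congr 2
  rw [show ((2:ℕ):ℝ)/2 = 1 by norm_num]
  exact prod_one_add k

lemma SS_two_rep (u : ℝ) : 2 * π * SS 2 u = ∫ φ in (0:ℝ)..(2*π), Real.cos (u * Real.cos φ) := by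
  have h2π : (0:ℝ) ≤ 2*π := by positivity
  set F : ℕ → ℝ → ℝ := fun k φ => (-1:ℝ)^k * (u * Real.cos φ)^(2*k) / ((2*k).factorial : ℝ) with hF
  have hcont : ∀ k, Continuous (F k) := by intro k; rw [hF]; fun_prop
  have hFint : ∀ k : ℕ, Integrable (F k) (volume.restrict (Set.Ioc (0:ℝ) (2*π))) :=
    fun k => (hcont k).integrableOn_Ioc
  have hb : ∀ (k : ℕ) (φ : ℝ), ‖F k φ‖ ≤ (u^2)^k / k.factorial := by
    intro k φ
    rw [hF]
    simp only [norm_div, norm_mul, norm_pow, norm_neg, norm_one, one_pow, one_mul,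
      Real.norm_natCast]
    have h1 : (‖u‖ * ‖Real.cos φ‖)^(2*k) ≤ (u^2)^k := by
      rw [← sq_abs u, ← pow_mul]
      apply pow_le_pow_left₀ (by positivity)
      calc ‖u‖ * ‖Real.cos φ‖ ≤ ‖u‖ * 1 :=
            mul_le_mul_of_nonneg_left (Real.abs_cos_le_one φ) (norm_nonneg u)
      _ = |u| := by rw [mul_one]; rfl
    have h2 : ((k.factorial : ℝ)) ≤ ((2*k).factorial : ℝ) := by
      exact_mod_cast Nat.factorial_le (by omega)
    have hfp : (0:ℝ) < k.factorial := by exact_mod_cast Nat.factorial_pos k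
    exact div_le_div₀ (by positivity) h1 hfp h2
  have hbound : ∀ k : ℕ, (∫ φ in Set.Ioc (0:ℝ) (2*π), ‖F k φ‖) ≤ (2*π) * ((u^2)^k / k.factorial) := by
    intro k
    calc (∫ φ in Set.Ioc (0:ℝ) (2*π), ‖F k φ‖)
        ≤ ∫ _ in Set.Ioc (0:ℝ) (2*π), ((u^2)^k / k.factorial : ℝ) := by
          apply MeasureTheory.setIntegral_mono (hFint k).norm ((integrableOn_const_iff (C := ((u^2)^k / k.factorial : ℝ))).mpr _)
          · intro φ; exact hb k φ
          · right; rw [Real.volume_Ioc]; exact ENNReal.ofReal_lt_top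
    _ = (2*π) * ((u^2)^k / k.factorial) := by
          rw [MeasureTheory.setIntegral_const, measureReal_def, Real.volume_Ioc, smul_eq_mul]
          rw [ENNReal.toReal_ofReal (by linarith)]
          ring
  have hF_sum : Summable fun k => ∫ φ in Set.Ioc (0:ℝ) (2*π), ‖F k φ‖ := by
    apply Summable.of_nonneg_of_le
      (fun k => MeasureTheory.integral_nonneg (fun φ => norm_nonneg _)) hbound
    exact ((Real.summable_pow_div_factorial (u^2)).mul_left (2*π))
  have key := MeasureTheory.hasSum_integral_of_summable_integral_norm hFint hF_sum
  have htsum : ∀ φ : ℝ, (∑' k, F k φ) = Real.cos (u * Real.cos φ) := by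
    intro φ
    rw [hF]
    exact (Real.cos_eq_tsum (u * Real.cos φ)).symm
  have hval : ∀ k : ℕ, (∫ φ in Set.Ioc (0:ℝ) (2*π), F k φ)
      = 2*π*((-1:ℝ)^k * oc 2 k * (u^2/4)^k) := by
    intro k
    rw [← intervalIntegral.integral_of_le h2π]
    have : ∀ φ : ℝ, F k φ = ((-1:ℝ)^k * u^(2*k) / ((2*k).factorial : ℝ)) * Real.cos φ ^ (2*k) := by
      intro φ; rw [hF]; simp only [mul_pow]; ring
    rw [intervalIntegral.integral_congr (fun φ _ => this φ),
      intervalIntegral.integral_const_mul, integral_cos_pow_two_pi, prod_odd_even, oc_two]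
    have hfp : (0:ℝ) < k.factorial := by exact_mod_cast Nat.factorial_pos k
    have hfp2 : (0:ℝ) < (2*k).factorial := by exact_mod_cast Nat.factorial_pos (2*k)
    rw [pow_mul]
    field_simp
    rw [← mul_pow]; ring
  rw [SS, ← tsum_mul_left]
  have : (fun k => 2*π*((-1:ℝ)^k * oc 2 k * (u^2/4)^k))
      = fun k => (∫ φ in Set.Ioc (0:ℝ) (2*π), F k φ) := by
    ext k; rw [hval k]
  rw [this]
  rw [key.tsum_eq, ← intervalIntegral.integral_of_le h2π]
  exact intervalIntegral.integral_congr (fun φ _ => htsum φ)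
lemma tri (a b c : ℝ) :
    0 ≤ 3 + 2*(Real.cos (a-b) + Real.cos (a-c) + Real.cos (b-c)) := by
  nlinarith [Real.cos_sub a b, Real.cos_sub a c, Real.cos_sub b c,
    Real.sin_sq_add_cos_sq a, Real.sin_sq_add_cos_sq b, Real.sin_sq_add_cos_sq c,
    sq_nonneg (Real.cos a + Real.cos b + Real.cos c),
    sq_nonneg (Real.sin a + Real.sin b + Real.sin c)]

lemma cos_integral_periodic (u : ℝ) :
    Function.Periodic (fun φ : ℝ => Real.cos (u * Real.cos φ)) (2*π) :=
  Real.cos_periodic.comp (fun x => Real.cos (u * x))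

lemma integral_shift (u γ : ℝ) :
    (∫ φ in (0:ℝ)..(2*π), Real.cos (u * Real.cos (φ - γ)))
      = ∫ φ in (0:ℝ)..(2*π), Real.cos (u * Real.cos φ) := by
  have h1 := intervalIntegral.integral_comp_sub_right (a := (0:ℝ)) (b := 2*π)
    (fun φ => Real.cos (u * Real.cos φ)) γ
  rw [h1]
  have h2 := (cos_integral_periodic u).intervalIntegral_add_eq (0 - γ) 0
  rw [zero_add] at h2
  rw [show (2*π) - γ = 0 - γ + 2*π by ring]
  exact h2

lemma rep_gen (u A B : ℝ) (hAB : A^2 + B^2 = 1) :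
    (∫ φ in (0:ℝ)..(2*π), Real.cos (u * (A * Real.cos φ + B * Real.sin φ)))
      = ∫ φ in (0:ℝ)..(2*π), Real.cos (u * Real.cos φ) := by
  set z : ℂ := ⟨A, B⟩ with hz
  have habs : ‖z‖ = 1 := by
    rw [Complex.norm_def, Complex.normSq_mk]
    rw [show A*A + B*B = 1 by nlinarith]
    exact Real.sqrt_one
  have hz0 : z ≠ 0 := by
    intro h; rw [h] at habs; simp at habs
  have hcos : Real.cos z.arg = A := by rw [Complex.cos_arg hz0, habs]; simp [hz]
  have hsin : Real.sin z.arg = B := by rw [Complex.sin_arg, habs]; simp [hz]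
  have : ∀ φ : ℝ, u * (A * Real.cos φ + B * Real.sin φ) = u * Real.cos (φ - z.arg) := by
    intro φ
    rw [Real.cos_sub, hcos, hsin]; ring
  rw [intervalIntegral.integral_congr (fun φ _ => by rw [this φ])]
  exact integral_shift u z.arg

lemma SS_two_lower (u : ℝ) : SS 2 u ≥ -(1/2) := by
  set s3 : ℝ := Real.sqrt 3 with hs3def
  have hs3 : s3^2 = 3 := Real.sq_sqrt (by norm_num)
  set I := ∫ φ in (0:ℝ)..(2*π), Real.cos (u * Real.cos φ) with hI
  set f1 : ℝ → ℝ := fun φ => Real.cos (u * ((s3/2) * Real.cos φ + (-(1:ℝ)/2) * Real.sin φ)) with hf1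
  set f2 : ℝ → ℝ := fun φ => Real.cos (u * ((s3/2) * Real.cos φ + ((1:ℝ)/2) * Real.sin φ)) with hf2
  set f3 : ℝ → ℝ := fun φ => Real.cos (u * ((0:ℝ) * Real.cos φ + (1:ℝ) * Real.sin φ)) with hf3
  have hint1 : IntervalIntegrable f1 volume 0 (2*π) := (Continuous.intervalIntegrable (by fun_prop) _ _)
  have hint2 : IntervalIntegrable f2 volume 0 (2*π) := (Continuous.intervalIntegrable (by fun_prop) _ _)
  have hint3 : IntervalIntegrable f3 volume 0 (2*π) := (Continuous.intervalIntegrable (by fun_prop) _ _)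
  have hnn : ∀ φ : ℝ, 0 ≤ 3 + 2*(f1 φ + f2 φ + f3 φ) := by
    intro φ
    have := tri (u*((s3/3) * Real.cos φ + 0 * Real.sin φ))
      (u*((-(s3/6)) * Real.cos φ + (1/2) * Real.sin φ))
      (u*((-(s3/6)) * Real.cos φ + (-(1:ℝ)/2) * Real.sin φ))
    rw [show u*((s3/3) * Real.cos φ + 0 * Real.sin φ) - u*((-(s3/6)) * Real.cos φ + (1/2) * Real.sin φ)
        = u * ((s3/2) * Real.cos φ + (-(1:ℝ)/2) * Real.sin φ) by ring,
      show u*((s3/3) * Real.cos φ + 0 * Real.sin φ) - u*((-(s3/6)) * Real.cos φ + (-(1:ℝ)/2) * Real.sin φ)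
        = u * ((s3/2) * Real.cos φ + ((1:ℝ)/2) * Real.sin φ) by ring,
      show u*((-(s3/6)) * Real.cos φ + (1/2) * Real.sin φ) - u*((-(s3/6)) * Real.cos φ + (-(1:ℝ)/2) * Real.sin φ)
        = u * ((0:ℝ) * Real.cos φ + (1:ℝ) * Real.sin φ) by ring] at this
    exact this
  have hIsum : (∫ φ in (0:ℝ)..(2*π), (3 + 2*(f1 φ + f2 φ + f3 φ))) = 6*π + 2*(3*I) := by
    have hc3 : IntervalIntegrable (fun _ : ℝ => (3:ℝ)) volume 0 (2*π) :=
      intervalIntegrable_const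
    rw [intervalIntegral.integral_add hc3 (((hint1.add hint2).add hint3).const_mul 2),
      intervalIntegral.integral_const_mul,
      intervalIntegral.integral_add (hint1.add hint2) hint3,
      intervalIntegral.integral_add hint1 hint2,
      intervalIntegral.integral_const]
    have hs3' : (s3/2)^2 + (-(1:ℝ)/2)^2 = 1 := by nlinarith
    have hs3'' : (s3/2)^2 + ((1:ℝ)/2)^2 = 1 := by nlinarith
    have h0 : ((0:ℝ))^2 + ((1:ℝ))^2 = 1 := by norm_num
    rw [hf1, hf2, hf3]
    rw [rep_gen u (s3/2) (-(1:ℝ)/2) hs3', rep_gen u (s3/2) ((1:ℝ)/2) hs3'',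
      rep_gen u 0 1 h0, ← hI]
    simp
    ring
  have hpos : 0 ≤ (∫ φ in (0:ℝ)..(2*π), (3 + 2*(f1 φ + f2 φ + f3 φ))) := by
    apply intervalIntegral.integral_nonneg (by positivity)
    intro φ _
    exact hnn φ
  rw [hIsum] at hpos
  have hIlb : I ≥ -π := by linarith
  have := SS_two_rep u
  rw [← hI] at this
  have hπ : 0 < π := Real.pi_pos
  nlinarith


noncomputable def mmk (c k : ℕ) : ℝ := ∫ u in (0:ℝ)..1, u^c * (1-u^2)^k

lemma mmk_zero (c : ℕ) : mmk c 0 = 1/(c+1) := by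
  simp only [mmk, pow_zero, mul_one, integral_pow]
  norm_num

lemma mmk_succ (c k : ℕ) : ((c:ℝ)+1) * mmk c (k+1) = (2*k+2) * (mmk c k - mmk c (k+1)) := by
  have hd : ∀ u : ℝ, HasDerivAt (fun u : ℝ => u^(c+1) * (1-u^2)^(k+1))
      (((c:ℝ)+1) * (u^c * (1-u^2)^(k+1)) - (2*k+2) * (u^(c+2) * (1-u^2)^k)) u := by
    intro u
    have h1 : HasDerivAt (fun u : ℝ => u^(c+1)) (((c+1:ℕ):ℝ) * u^c) u := by
      simpa using hasDerivAt_pow (c+1) u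
    have h2 : HasDerivAt (fun u : ℝ => (1-u^2)^(k+1))
        (((k+1:ℕ):ℝ) * (1-u^2)^k * (-(2*u))) u := by
      have hb : HasDerivAt (fun u : ℝ => 1-u^2) (-(2*u)) u := by
        simpa using ((hasDerivAt_pow 2 u).const_sub 1)
      simpa using hb.fun_pow (k+1)
    have := h1.fun_mul h2
    refine this.congr_deriv ?_
    push_cast
    ring
  have hcont : Continuous fun u : ℝ =>
      ((c:ℝ)+1) * (u^c * (1-u^2)^(k+1)) - (2*k+2) * (u^(c+2) * (1-u^2)^k) := by fun_prop
  have hFTC := intervalIntegral.integral_eq_sub_of_hasDerivAt (fun u _ => hd u)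
    (hcont.intervalIntegrable 0 1)
  have h0 : ((1:ℝ)^(c+1) * (1-(1:ℝ)^2)^(k+1)) - ((0:ℝ)^(c+1) * (1-(0:ℝ)^2)^(k+1)) = 0 := by
    simp
  rw [h0] at hFTC
  have hsplit : (∫ u in (0:ℝ)..1,
      (((c:ℝ)+1) * (u^c * (1-u^2)^(k+1)) - (2*k+2) * (u^(c+2) * (1-u^2)^k)))
      = ((c:ℝ)+1) * mmk c (k+1) - (2*k+2) * ∫ u in (0:ℝ)..1, u^(c+2) * (1-u^2)^k := by
    rw [intervalIntegral.integral_sub, intervalIntegral.integral_const_mul,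
      intervalIntegral.integral_const_mul, mmk]
    · exact (Continuous.intervalIntegrable (by fun_prop) _ _)
    · exact (Continuous.intervalIntegrable (by fun_prop) _ _)
  have hmid : (∫ u in (0:ℝ)..1, u^(c+2) * (1-u^2)^k) = mmk c k - mmk c (k+1) := by
    rw [mmk, mmk, ← intervalIntegral.integral_sub
      (Continuous.intervalIntegrable (by fun_prop) _ _)
      (Continuous.intervalIntegrable (by fun_prop) _ _)]
    congr 1; ext u; ring
  rw [hsplit, hmid] at hFTC
  linarith
lemma mmk_closed (c k : ℕ) :
    ((c:ℝ)+1) * (∏ i ∈ Finset.range k, ((c:ℝ)+2*i+3)) * mmk c k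
      = ∏ i ∈ Finset.range k, (2*(i:ℝ)+2) := by
  induction k with
  | zero => simp [mmk_zero]; field_simp
  | succ k ih =>
    rw [Finset.prod_range_succ, Finset.prod_range_succ]
    have hrec := mmk_succ c k
    have h1 : ((c:ℝ)+2*k+3) ≠ 0 := by positivity
    have : mmk c (k+1) = (2*k+2)/((c:ℝ)+2*k+3) * mmk c k := by
      field_simp at hrec ⊢
      linarith
    rw [this, ← ih]
    field_simp


lemma prod_two_i (k : ℕ) : (∏ i ∈ Finset.range k, (2*(i:ℝ)+2)) = 2^k * k.factorial := by
  induction k with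
  | zero => simp
  | succ k ih => rw [Finset.prod_range_succ, ih, Nat.factorial_succ]; push_cast; ring

lemma prod_n_two (n k : ℕ) : (∏ i ∈ Finset.range k, ((n:ℝ)+2*i))
    = 2^k * ∏ i ∈ Finset.range k, ((n:ℝ)/2+i) := by
  rw [show (2:ℝ)^k = ∏ _i ∈ Finset.range k, (2:ℝ) by rw [Finset.prod_const, Finset.card_range],
    ← Finset.prod_mul_distrib]
  apply Finset.prod_congr rfl
  intro i _; ring

lemma oc_mmk (n : ℕ) (hn : 3 ≤ n) (k : ℕ) :
    oc 2 k * (((n:ℝ)-2) * mmk (n-3) k) = oc n k := by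
  have hcast : ((n-3:ℕ):ℝ) = (n:ℝ)-3 := by
    push_cast [Nat.cast_sub hn]; ring
  have hclosed := mmk_closed (n-3) k
  rw [hcast] at hclosed
  have h1 : (∏ i ∈ Finset.range k, ((n:ℝ)-3+2*i+3)) = ∏ i ∈ Finset.range k, ((n:ℝ)+2*i) := by
    apply Finset.prod_congr rfl; intro i _; ring
  rw [h1, prod_two_i] at hclosed
  have hn3 : (3:ℝ) ≤ n := by exact_mod_cast hn
  have hprod : (0:ℝ) < ∏ i ∈ Finset.range k, ((n:ℝ)/2+i) := prod_pos' n k (by omega)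
  have hfac : (0:ℝ) < k.factorial := by exact_mod_cast Nat.factorial_pos k
  have hkey : ((n:ℝ)-2) * (∏ i ∈ Finset.range k, ((n:ℝ)/2+i)) * mmk (n-3) k
      = k.factorial := by
    have h2k : ((2:ℝ)^k) ≠ 0 := by positivity
    apply mul_left_cancel₀ h2k
    calc (2:ℝ)^k * (((n:ℝ)-2) * (∏ i ∈ Finset.range k, ((n:ℝ)/2+i)) * mmk (n-3) k)
        = ((n:ℝ)-3+1) * ((2:ℝ)^k * ∏ i ∈ Finset.range k, ((n:ℝ)/2+i)) * mmk (n-3) k := by ring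
    _ = ((n:ℝ)-3+1) * (∏ i ∈ Finset.range k, ((n:ℝ)+2*i)) * mmk (n-3) k := by
        rw [← prod_n_two]
    _ = 2^k * k.factorial := hclosed
  have hdiv : ((n:ℝ)-2) * mmk (n-3) k
      = k.factorial / ∏ i ∈ Finset.range k, ((n:ℝ)/2+i) := by
    rw [eq_div_iff hprod.ne']
    linarith [hkey]
  rw [oc_two, oc, hdiv]
  field_simp

lemma wallis_odd (c k : ℕ) :
    (∫ ψ in (0:ℝ)..(π/2), Real.sin ψ^(2*k+1) * Real.cos ψ^c) = mmk c k := by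
  have := integral_sin_pow_odd_mul_cos_pow (a := (0:ℝ)) (b := π/2) k c
  rw [Real.cos_pi_div_two, Real.cos_zero] at this
  rw [this, mmk]

lemma SS_rep (n : ℕ) (hn : 3 ≤ n) (t : ℝ) :
    SS n t = ∫ ψ in (0:ℝ)..(π/2), SS 2 (t * Real.sin ψ) *
      (((n:ℝ)-2) * Real.sin ψ * Real.cos ψ^(n-3)) := by
  have hπ : (0:ℝ) ≤ π/2 := by positivity
  have hn3 : (3:ℝ) ≤ n := by exact_mod_cast hn
  set ρ : ℝ → ℝ := fun ψ => ((n:ℝ)-2) * Real.sin ψ * Real.cos ψ^(n-3) with hρ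
  set G : ℕ → ℝ → ℝ := fun k ψ => ((-1:ℝ)^k * oc 2 k * ((t*Real.sin ψ)^2/4)^k) * ρ ψ with hG
  have hcont : ∀ k, Continuous (G k) := by intro k; rw [hG, hρ]; fun_prop
  have hGint : ∀ k : ℕ, Integrable (G k) (volume.restrict (Set.Ioc (0:ℝ) (π/2))) :=
    fun k => (hcont k).integrableOn_Ioc
  have hocpos : ∀ k, 0 < oc 2 k := fun k => oc_pos 2 k (by norm_num)
  have hGb : ∀ (k : ℕ) (ψ : ℝ), ‖G k ψ‖ ≤ oc 2 k * (t^2/4)^k * ((n:ℝ)-2) := by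
    intro k ψ
    rw [hG, Real.norm_eq_abs, abs_mul]
    have hA : |(-1:ℝ)^k * oc 2 k * ((t*Real.sin ψ)^2/4)^k| ≤ oc 2 k * (t^2/4)^k := by
      rw [abs_mul, abs_mul, abs_pow, abs_pow, abs_neg, abs_one, one_pow, one_mul,
        abs_of_pos (hocpos k)]
      apply mul_le_mul_of_nonneg_left _ (le_of_lt (hocpos k))
      apply pow_le_pow_left₀ (abs_nonneg _)
      rw [abs_of_nonneg (by positivity : (0:ℝ) ≤ (t*Real.sin ψ)^2/4)]
      nlinarith [Real.sin_sq_le_one ψ, sq_nonneg t]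
    have hρb : |ρ ψ| ≤ (n:ℝ)-2 := by
      rw [hρ]
      simp only
      rw [abs_mul, abs_mul, abs_pow, abs_of_nonneg (by linarith : (0:ℝ) ≤ (n:ℝ)-2)]
      have h1 : |Real.sin ψ| ≤ 1 := Real.abs_sin_le_one ψ
      have h2 : |Real.cos ψ|^(n-3) ≤ 1 := pow_le_one₀ (abs_nonneg _) (Real.abs_cos_le_one ψ)
      have h3 : |Real.sin ψ| * |Real.cos ψ|^(n-3) ≤ 1*1 :=
        mul_le_mul h1 h2 (pow_nonneg (abs_nonneg _) _) (by norm_num)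
      nlinarith [mul_nonneg (abs_nonneg (Real.sin ψ)) (pow_nonneg (abs_nonneg (Real.cos ψ)) (n-3))]
    calc |(-1:ℝ)^k * oc 2 k * ((t*Real.sin ψ)^2/4)^k| * |ρ ψ|
        ≤ (oc 2 k * (t^2/4)^k) * ((n:ℝ)-2) :=
          mul_le_mul hA hρb (abs_nonneg _) (mul_nonneg (le_of_lt (hocpos k)) (by positivity))
    _ = oc 2 k * (t^2/4)^k * ((n:ℝ)-2) := by ring
  have hbound : ∀ k : ℕ, (∫ ψ in Set.Ioc (0:ℝ) (π/2), ‖G k ψ‖)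
      ≤ (π/2) * (oc 2 k * (t^2/4)^k * ((n:ℝ)-2)) := by
    intro k
    calc (∫ ψ in Set.Ioc (0:ℝ) (π/2), ‖G k ψ‖)
        ≤ ∫ _ in Set.Ioc (0:ℝ) (π/2), (oc 2 k * (t^2/4)^k * ((n:ℝ)-2)) := by
          apply MeasureTheory.setIntegral_mono (hGint k).norm ((integrableOn_const_iff (C := (oc 2 k * (t^2/4)^k * ((n:ℝ)-2)))).mpr _)
          · intro ψ; exact hGb k ψ
          · right; rw [Real.volume_Ioc]; exact ENNReal.ofReal_lt_top
    _ = (π/2) * (oc 2 k * (t^2/4)^k * ((n:ℝ)-2)) := by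
          rw [MeasureTheory.setIntegral_const, measureReal_def, Real.volume_Ioc, smul_eq_mul,
            ENNReal.toReal_ofReal (by linarith)]
          ring
  have hG_sum : Summable fun k => ∫ ψ in Set.Ioc (0:ℝ) (π/2), ‖G k ψ‖ := by
    apply Summable.of_nonneg_of_le
      (fun k => MeasureTheory.integral_nonneg (fun ψ => norm_nonneg _)) hbound
    have hs : Summable fun k : ℕ => (t^2/4)^k / k.factorial :=
      Real.summable_pow_div_factorial (t^2/4)
    have : ∀ k : ℕ, (π/2) * (oc 2 k * (t^2/4)^k * ((n:ℝ)-2))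
        ≤ ((π/2) * ((n:ℝ)-2)) * ((t^2/4)^k / k.factorial) := by
      intro k
      have h1 : oc 2 k * (t^2/4)^k ≤ (t^2/4)^k / k.factorial := by
        have := oc_le 2 k (by norm_num)
        have hp : (0:ℝ) ≤ (t^2/4)^k := by positivity
        calc oc 2 k * (t^2/4)^k ≤ (1/(k.factorial:ℝ)) * (t^2/4)^k :=
              mul_le_mul_of_nonneg_right this hp
        _ = (t^2/4)^k / k.factorial := by ring
      calc (π/2) * (oc 2 k * (t^2/4)^k * ((n:ℝ)-2))
          = ((π/2) * ((n:ℝ)-2)) * (oc 2 k * (t^2/4)^k) := by ring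
      _ ≤ ((π/2) * ((n:ℝ)-2)) * ((t^2/4)^k / k.factorial) := by
            apply mul_le_mul_of_nonneg_left h1
            have : (0:ℝ) < π := Real.pi_pos
            nlinarith
    apply Summable.of_nonneg_of_le _ this (hs.mul_left _)
    intro k
    have h1 := hocpos k
    have h2 : (0:ℝ) < π := Real.pi_pos
    apply mul_nonneg (by positivity)
    apply mul_nonneg (mul_nonneg h1.le (by positivity))
    linarith
  have key := MeasureTheory.hasSum_integral_of_summable_integral_norm hGint hG_sum
  have htsum : ∀ ψ : ℝ, (∑' k, G k ψ) = SS 2 (t * Real.sin ψ) * ρ ψ := by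
    intro ψ
    rw [SS, ← tsum_mul_right]
  have hval : ∀ k : ℕ, (∫ ψ in Set.Ioc (0:ℝ) (π/2), G k ψ)
      = (-1:ℝ)^k * oc n k * (t^2/4)^k := by
    intro k
    rw [← intervalIntegral.integral_of_le hπ]
    have hgg : ∀ ψ : ℝ, G k ψ = ((-1:ℝ)^k * oc 2 k * (t^2/4)^k * ((n:ℝ)-2)) *
        (Real.sin ψ^(2*k+1) * Real.cos ψ^(n-3)) := by
      intro ψ
      rw [hG, hρ]
      simp only
      ring
    rw [intervalIntegral.integral_congr (fun ψ _ => hgg ψ),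
      intervalIntegral.integral_const_mul, wallis_odd]
    have h := oc_mmk n hn k
    linear_combination ((-1:ℝ)^k * (t^2/4)^k) * h
  rw [SS]
  have : (fun k : ℕ => (-1:ℝ)^k * oc n k * (t^2/4)^k)
      = fun k => (∫ ψ in Set.Ioc (0:ℝ) (π/2), G k ψ) := by
    ext k; rw [hval k]
  rw [this, key.tsum_eq, ← intervalIntegral.integral_of_le hπ]
  exact intervalIntegral.integral_congr (fun ψ _ => htsum ψ)

lemma SS_two_continuous : Continuous (SS 2) := by
  have h1 : Continuous fun u : ℝ => ∫ φ in (0:ℝ)..(2*π), Real.cos (u * Real.cos φ) := by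
    apply intervalIntegral.continuous_parametric_intervalIntegral_of_continuous'
    fun_prop
  have h2 : SS 2 = fun u => (1/(2*π)) * ∫ φ in (0:ℝ)..(2*π), Real.cos (u * Real.cos φ) := by
    ext u
    have := SS_two_rep u
    have hπ : (0:ℝ) < π := Real.pi_pos
    field_simp
    linarith [this]
  rw [h2]
  exact continuous_const.mul h1

lemma SS_lower (n : ℕ) (hn : 2 ≤ n) (t : ℝ) : SS n t ≥ -(1/2) := by
  rcases eq_or_lt_of_le hn with h2 | h3
  · rw [← h2]; exact SS_two_lower t
  · have hn3 : 3 ≤ n := h3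
    have hn3' : (3:ℝ) ≤ n := by exact_mod_cast hn3
    rw [SS_rep n hn3 t]
    have hπ : (0:ℝ) < π := Real.pi_pos
    set ρ : ℝ → ℝ := fun ψ => ((n:ℝ)-2) * Real.sin ψ * Real.cos ψ^(n-3) with hρ
    have hρcont : Continuous ρ := by rw [hρ]; fun_prop
    have hρint : (∫ ψ in (0:ℝ)..(π/2), ρ ψ) = 1 := by
      rw [hρ]
      have : ∀ ψ : ℝ, ((n:ℝ)-2) * Real.sin ψ * Real.cos ψ^(n-3)
          = ((n:ℝ)-2) * (Real.sin ψ^(2*0+1) * Real.cos ψ^(n-3)) := by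
        intro ψ; ring
      rw [intervalIntegral.integral_congr (fun ψ _ => this ψ),
        intervalIntegral.integral_const_mul, wallis_odd, mmk_zero]
      have hcast : ((n-3:ℕ):ℝ) = (n:ℝ)-3 := by push_cast [Nat.cast_sub hn3]; ring
      rw [hcast]
      rw [show (n:ℝ)-3+1 = (n:ℝ)-2 by ring]
      have : (n:ℝ)-2 ≠ 0 := by linarith
      field_simp
    have hρnn : ∀ ψ ∈ Set.Icc (0:ℝ) (π/2), 0 ≤ ρ ψ := by
      intro ψ hψ
      rw [hρ]
      have hs : 0 ≤ Real.sin ψ := Real.sin_nonneg_of_nonneg_of_le_pi hψ.1 (by linarith [hψ.2])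
      have hc : 0 ≤ Real.cos ψ := Real.cos_nonneg_of_mem_Icc ⟨by linarith [hψ.1], hψ.2⟩
      have : (0:ℝ) ≤ (n:ℝ)-2 := by linarith
      positivity
    have hmono : ∀ ψ ∈ Set.Icc (0:ℝ) (π/2),
        (-(1/2)) * ρ ψ ≤ SS 2 (t * Real.sin ψ) * ρ ψ := by
      intro ψ hψ
      exact mul_le_mul_of_nonneg_right (SS_two_lower (t * Real.sin ψ)) (hρnn ψ hψ)
    have hint1 : IntervalIntegrable (fun ψ => (-(1/2:ℝ)) * ρ ψ) volume 0 (π/2) :=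
      (Continuous.intervalIntegrable (by fun_prop) _ _)
    have hint2 : IntervalIntegrable (fun ψ => SS 2 (t * Real.sin ψ) * ρ ψ) volume 0 (π/2) := by
      apply Continuous.intervalIntegrable
      exact (SS_two_continuous.comp (by fun_prop)).mul hρcont
    have := intervalIntegral.integral_mono_on (by positivity) hint1 hint2 hmono
    rw [intervalIntegral.integral_const_mul, hρint] at this
    linarith

lemma omega_lower (n : ℕ) (hn : 2 ≤ n) (t : ℝ) (ht : 0 ≤ t) : Omega n t ≥ -(1/2) := by
  rw [omega_eq_SS n hn t ht]
  exact SS_lower n hn t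

lemma wsum (N : ℕ) : ∀ (m a : ℕ), a + m = N →
    (∑ i ∈ Finset.Icc a N, ((1:ℝ)/2^(N-i+1))) = 1 - ((1:ℝ)/2)^(m+1) := by
  intro m
  induction m with
  | zero =>
    intro a ha
    have : a = N := by omega
    subst this
    simp [Nat.sub_self]
    norm_num
  | succ m ih =>
    intro a ha
    have haN : a ≤ N := by omega
    rw [Finset.Icc_eq_cons_Ioc haN, Finset.sum_cons, ← Finset.Icc_add_one_left_eq_Ioc,
      ih (a+1) (by omega)]
    have h1 : N - a + 1 = m + 2 := by omega
    rw [h1]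
    have h2 : ((1:ℝ)/2)^(m+1) = 2 * ((1/2:ℝ))^(m+2) := by rw [pow_succ]; ring
    have h3 : ((1:ℝ)/2^(m+2)) = ((1/2:ℝ))^(m+2) := by rw [one_div_pow]
    rw [h3, h2]
    ring

theorem bukh_claim (n N : ℕ) (hn : 2 ≤ n) (hN : 1 ≤ N) (ε : ℝ)
    (hε : ε = 1 / (N * 2 ^ (N + 1)))
    (t₀ t₁ r : ℝ) (ht₀ : 0 < t₀)
    (ht₀' : ∀ t : ℝ, 0 ≤ t → t ≤ t₀ → Omega n t > 1 - ε)
    (ht₁ : t₀ < t₁)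
    (ht₁' : ∀ t : ℝ, t₁ ≤ t → |Omega n t| < ε)
    (hr : r = t₁ / t₀)
    (d : ℕ → ℝ) (hd : ∀ i, 1 ≤ i → i ≤ N → 0 < d i)
    (hratio : ∀ i, 1 ≤ i → i < N → d (i + 1) / d i > r) :
    ∀ j, 1 ≤ j → j ≤ N → ∀ t : ℝ, 0 ≤ t →
      ∑ i ∈ Finset.Icc j N, (1 / 2 ^ (N - i + 1) : ℝ) * Omega n (t * d i) ≥
        -(1 / 2 ^ (N - j + 2)) - (N - j : ℝ) * ε := by
  have hεpos : 0 < ε := by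
    rw [hε]
    have h1 : (0:ℝ) < N := by exact_mod_cast hN
    positivity
  have hr1 : 1 < r := by rw [hr]; exact (one_lt_div ht₀).mpr ht₁
  have hrt : r * t₀ = t₁ := by rw [hr]; field_simp
  have hmono : ∀ i j : ℕ, 1 ≤ i → i ≤ j → j ≤ N → d i ≤ d j := by
    intro i j h1 hij hjN
    induction j with
    | zero => omega
    | succ j ihj =>
      rcases Nat.lt_or_ge i (j+1) with hlt | hge
      · have hij' : i ≤ j := by omega
        have h1j : 1 ≤ j := by omega
        have hjN' : j ≤ N := by omega
        have hstep : d j < d (j+1) := by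
          have h0 := hratio j h1j (by omega)
          have hdj := hd j h1j hjN'
          have h2 : r * d j < d (j+1) := (lt_div_iff₀ hdj).mp h0
          nlinarith [hdj, hr1]
        exact le_trans (ihj hij' hjN') (le_of_lt hstep)
      · have : i = j+1 := by omega
        subst this; rfl
  -- main downward induction
  suffices H : ∀ m : ℕ, ∀ j : ℕ, 1 ≤ j → j + m = N → ∀ t : ℝ, 0 ≤ t →
      ∑ i ∈ Finset.Icc j N, (1 / 2 ^ (N - i + 1) : ℝ) * Omega n (t * d i) ≥
        -(1 / 2 ^ (N - j + 2)) - (N - j : ℝ) * ε by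
    intro j hj1 hjN t ht
    exact H (N - j) j hj1 (by omega) t ht
  intro m
  induction m with
  | zero =>
    intro j hj1 hjN t ht
    have hjN' : j = N := by omega
    have hIcc : Finset.Icc j N = {j} := by rw [hjN', Finset.Icc_self]
    rw [hIcc, Finset.sum_singleton]
    have h1 : N - j + 1 = 1 := by omega
    have h2 : N - j + 2 = 2 := by omega
    rw [h1, h2]
    have hdj : 0 < d j := hd j hj1 (by omega)
    have hΩ := omega_lower n hn (t * d j) (by positivity)
    have h3 : ((N:ℝ) - j) = 0 := by
      have : (N:ℝ) = (j:ℝ) := by exact_mod_cast congrArg (Nat.cast : ℕ → ℝ) hjN'.symm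
      rw [this]; ring
    rw [h3]
    nlinarith [hΩ]
  | succ m ih =>
    intro j hj1 hjN t ht
    have hjN' : j ≤ N := by omega
    have hjltN : j < N := by omega
    have hdj : 0 < d j := hd j hj1 hjN'
    have hNj1 : N - j + 1 = m + 2 := by omega
    have hNj2 : N - j + 2 = m + 3 := by omega
    have hNjR : ((N:ℝ) - j) = (m:ℝ) + 1 := by
      have h0 : ((j + (m+1) : ℕ) : ℝ) = (N:ℝ) := by exact_mod_cast congrArg (Nat.cast : ℕ → ℝ) hjN
      push_cast at h0
      linarith
    have hIH := ih (j+1) (by omega) (by omega) t ht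
    have e1 : N - (j+1) + 2 = m + 2 := by omega
    have e1' : N - (j+1) + 1 = m + 1 := by omega
    have eR : ((N:ℝ) - ((j:ℕ)+1:ℕ)) = (m:ℝ) := by push_cast; linarith [hNjR]
    rw [e1] at hIH
    rw [show ((N:ℝ) - ((j+1:ℕ):ℝ)) = (m:ℝ) by push_cast; linarith [hNjR]] at hIH
    rw [hNj2, hNjR]
    rw [Finset.Icc_eq_cons_Ioc hjN', Finset.sum_cons, ← Finset.Icc_add_one_left_eq_Ioc, hNj1]
    have hwpos : (0:ℝ) < 1/2^(m+2) := by positivity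
    set x := t * d j with hx
    have hx0 : 0 ≤ x := by positivity
    have h2a : (1:ℝ) ≤ 2^(m+2) := one_le_pow₀ (by norm_num)
    rcases le_or_gt x t₀ with hA | hA
    · -- x ≤ t₀ : head term is large
      have hΩ := ht₀' x hx0 hA
      have hterm : (1/2^(m+2):ℝ)*(1-ε) ≤ (1/2^(m+2):ℝ) * Omega n x :=
        mul_le_mul_of_nonneg_left hΩ.le hwpos.le
      have hq : (0:ℝ) ≤ ε*(1 - 1/2^(m+2)) := by
        apply mul_nonneg hεpos.le
        rw [sub_nonneg, div_le_one (by positivity)]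
        exact h2a
      have hp3 : (0:ℝ) < 1/2^(m+3) := by positivity
      set P : ℝ := ∑ i ∈ Finset.Icc (j+1) N, (1 / 2 ^ (N - i + 1) : ℝ) * Omega n (t * d i)
        with hP
      set w2 : ℝ := (1/2^(m+2):ℝ) with hw2
      set w3 : ℝ := (1/2^(m+3):ℝ) with hw3
      linarith [hIH, hterm, hq, hp3]
    · -- x > t₀ : tail terms are small
      have ht' : 0 < t := by
        rcases lt_or_ge 0 t with h | h
        · exact h
        · exfalso
          have : x ≤ 0 := mul_nonpos_of_nonpos_of_nonneg h hdj.le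
          linarith
      have hΩj := omega_lower n hn x hx0
      have hterm : -(1/2^(m+3):ℝ) ≤ (1/2^(m+2):ℝ) * Omega n x := by
        have h1 : (1/2^(m+2):ℝ) * (-(1/2)) ≤ (1/2^(m+2):ℝ) * Omega n x :=
          mul_le_mul_of_nonneg_left hΩj hwpos.le
        have h2 : (1/2^(m+3):ℝ) = (1/2^(m+2):ℝ) * (1/2) := by rw [pow_succ]; ring
        linarith [h1, h2]
      have htail : ∀ i ∈ Finset.Icc (j+1) N, t₁ ≤ t * d i := by
        intro i hi
        rw [Finset.mem_Icc] at hi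
        have hdj1 : 0 < d (j+1) := hd (j+1) (by omega) (by omega)
        have hr0 : r * d j < d (j+1) := (lt_div_iff₀ hdj).mp (hratio j hj1 hjltN)
        have h1 : t₁ < t * d (j+1) := by
          calc t₁ = r * t₀ := hrt.symm
          _ < r * x := by
              apply mul_lt_mul_of_pos_left hA
              linarith [hr1]
          _ = r * d j * t := by rw [hx]; ring
          _ < d (j+1) * t := by
              apply mul_lt_mul_of_pos_right hr0 ht'
          _ = t * d (j+1) := by ring
        calc t₁ ≤ t * d (j+1) := h1.le
        _ ≤ t * d i := mul_le_mul_of_nonneg_left (hmono (j+1) i (by omega) hi.1 hi.2) ht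
      have hsmall : ∀ i ∈ Finset.Icc (j+1) N,
          -ε * ((1:ℝ)/2^(N-i+1)) ≤ (1 / 2 ^ (N - i + 1) : ℝ) * Omega n (t * d i) := by
        intro i hi
        have hΩi : -ε < Omega n (t * d i) := (abs_lt.mp (ht₁' (t*d i) (htail i hi))).1
        have hw : (0:ℝ) < 1/2^(N-i+1) := by positivity
        have h1 : ((1:ℝ)/2^(N-i+1)) * (-ε) ≤ ((1:ℝ)/2^(N-i+1)) * Omega n (t * d i) :=
          mul_le_mul_of_nonneg_left hΩi.le hw.le
        linarith [h1]
      have hsum := Finset.sum_le_sum hsmall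
      rw [← Finset.mul_sum, wsum N m (j+1) (by omega)] at hsum
      have hq1 : (0:ℝ) ≤ ε * ((1/2:ℝ))^(m+1) :=
        mul_nonneg hεpos.le (pow_nonneg (by norm_num) _)
      have hq2 : (0:ℝ) ≤ (m:ℝ) * ε := mul_nonneg (Nat.cast_nonneg m) hεpos.le
      set P : ℝ := ∑ i ∈ Finset.Icc (j+1) N, (1 / 2 ^ (N - i + 1) : ℝ) * Omega n (t * d i)
        with hP
      linarith [hsum, hterm, hq1, hq2]
end
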